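/- Let S ⊆ Σ be a set of letters and R ⊆ (Σ \ S)* a subword-closed language with residuals totally ordered by inclusion. Let L = Σ*(S·R)^ω be the set of infinite words having a suffix which is an infinite concatenation of blocks each consisting of a letter of S followed by a word of R. Then for all u, v ∈ Σ⁺, if (u v)^ω ∈ L then u^ω ∈ L or v^ω ∈ L. -/

import Mathlib

def wper {α : Type*} [Inhabited α] (v : List α) : ℕ → α :=
  fun n => v.getD (n % v.length) default

/-- The finite factor `x[a..b)` of an infinite word `x`. -/
def seg {α : Type*} (x : ℕ → α) (a b : ℕ) : List α :=
  (List.range (b - a)).map (fun j => x (a + j))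

/-- Residual of a language of finite words. -/
def resF {α : Type*} (L : Set (List α)) (u : List α) : Set (List α) :=
  {w | u ++ w ∈ L}

/-- `SRomega S R` : the set `Σ*(S·R)^ω` of infinite words having a suffix which
is an infinite concatenation of blocks, each a letter of `S` followed by a word
of `R`. -/
def SRomega {σ : Type*} (S : Set σ) (R : Set (List σ)) : Set (ℕ → σ) :=
  {x | ∃ k : ℕ → ℕ, StrictMono k ∧
    ∀ i, x (k i) ∈ S ∧ seg x (k i + 1) (k (i + 1)) ∈ R}

section helpers
variable {σ : Type*} [Inhabited σ]
set_option linter.unusedSectionVars false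

lemma seg_congr (y x : ℕ → σ) (a b a' b' : ℕ) (hlen : b - a = b' - a')
    (h : ∀ j, j < b - a → y (a + j) = x (a' + j)) : seg y a b = seg x a' b' := by
  unfold seg
  rw [← hlen]
  exact List.map_congr_left fun j hj => h j (List.mem_range.mp hj)

lemma seg_append (y : ℕ → σ) (a b c : ℕ) (h1 : a ≤ b) (h2 : b ≤ c) :
    seg y a b ++ seg y b c = seg y a c := by
  unfold seg
  have h3 : c - a = (b - a) + (c - b) := by omega
  rw [h3, List.range_add, List.map_append, List.map_map]
  congr 1
  apply List.map_congr_left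
  intro j hj
  simp only [Function.comp_apply]
  congr 1
  omega

lemma mem_seg (y : ℕ → σ) {a b j : ℕ} (h1 : a ≤ j) (h2 : j < b) : y j ∈ seg y a b := by
  unfold seg
  refine List.mem_map.mpr ⟨j - a, List.mem_range.mpr (by omega), ?_⟩
  congr 1
  omega

lemma wper_eq_of_lt (u : List σ) (c : ℕ) {t : ℕ} (ht : t < u.length) :
    wper u (c * u.length + t) = u.getD t default := by
  unfold wper
  congr 1
  rw [Nat.add_comm, Nat.add_mul_mod_self_right, Nat.mod_eq_of_lt ht]

lemma wper_add_mul (u : List σ) (n c : ℕ) :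
    wper u (n + c * u.length) = wper u n := by
  unfold wper
  rw [Nat.add_mul_mod_self_right]

end helpers

section critext
variable {σ : Type*} [Inhabited σ] (S : Set σ) (R : Set (List σ))
set_option linter.unusedSectionVars false

lemma crit (y : ℕ → σ) (n1 : ℕ)
    (hinf : ∀ m, ∃ n, m ≤ n ∧ y n ∈ S)
    (hblk : ∀ a b, n1 ≤ a → a < b → y a ∈ S → y b ∈ S →
      (∀ j, a < j → j < b → y j ∉ S) → seg y (a + 1) b ∈ R) :
    y ∈ SRomega S R := by
  classical
  set Q : ℕ → Prop := fun n => n1 ≤ n ∧ y n ∈ S with hQdef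
  have hQinf : (setOf Q).Infinite := by
    intro hfin
    obtain ⟨C, hC⟩ := hfin.bddAbove
    obtain ⟨n, hn, hnS⟩ := hinf (max n1 C + 1)
    have hmem : n ∈ setOf Q := ⟨by omega, hnS⟩
    have := hC hmem
    omega
  have hsm : StrictMono (Nat.nth Q) := Nat.nth_strictMono hQinf
  have hmem : ∀ i, Q (Nat.nth Q i) := Nat.nth_mem_of_infinite hQinf
  refine ⟨Nat.nth Q, hsm, fun i => ?_⟩
  have hnoQ : ∀ j, Nat.nth Q i < j → j < Nat.nth Q (i + 1) → ¬ Q j := by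
    intro j h1 h2 hQj
    have hje := Nat.nth_count hQj
    rw [← hje] at h1 h2
    have g1 := hsm.lt_iff_lt.mp h1
    have g2 := hsm.lt_iff_lt.mp h2
    omega
  refine ⟨(hmem i).2, hblk _ _ (hmem i).1 (hsm (lt_add_one i)) (hmem i).2 (hmem (i + 1)).2 ?_⟩
  intro j hj1 hj2 hjS
  exact hnoQ j hj1 hj2 ⟨le_trans (hmem i).1 (le_of_lt hj1), hjS⟩

lemma extract (hR : ∀ w ∈ R, ∀ a ∈ w, a ∉ S)
    (y : ℕ → σ) (hy : y ∈ SRomega S R) :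
    ∃ n0 : ℕ, (∀ m, ∃ n, m ≤ n ∧ y n ∈ S) ∧
      ∀ a b, n0 ≤ a → a < b → y a ∈ S → y b ∈ S →
        (∀ j, a < j → j < b → y j ∉ S) → seg y (a + 1) b ∈ R := by
  classical
  obtain ⟨k, hk, hkS⟩ := hy
  refine ⟨k 0, fun m => ⟨k m, hk.le_apply, (hkS m).1⟩, ?_⟩
  intro a b ha hab haS hbS hgap
  set i := Nat.findGreatest (fun i => k i ≤ a) a with hidef
  have hki : k i ≤ a := by
    rw [hidef]
    exact Nat.findGreatest_spec (P := fun i => k i ≤ a) (m := 0) (Nat.zero_le a) ha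
  have hks : a < k (i + 1) := by
    by_contra h
    push_neg at h
    have hle : i + 1 ≤ a := le_trans hk.le_apply h
    exact Nat.findGreatest_is_greatest (lt_add_one i) hle h
  have hblock := (hkS i).2
  have haki : a = k i := by
    rcases eq_or_lt_of_le hki with h | h
    · exact h.symm
    · exact absurd haS (hR _ hblock _ (mem_seg y (by omega) (by omega)))
  have hbki : b = k (i + 1) := by
    rcases lt_trichotomy b (k (i + 1)) with h | h | h
    · exact absurd hbS (hR _ hblock _ (mem_seg y (by omega) h))
    · exact h
    · exact absurd (hkS (i + 1)).1 (hgap (k (i + 1)) (by omega) h)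
  rw [haki, hbki]
  exact hblock

end critext

section transfer
variable {σ : Type*} [Inhabited σ] (S : Set σ) (R : Set (List σ))
set_option linter.unusedSectionVars false

lemma transfer (w u : List σ) (hu : u ≠ [])
    (off : ℕ) (hoff : off + u.length ≤ w.length)
    (hocc : ∀ t, t < u.length → w.getD (off + t) default = u.getD t default)
    (n0 : ℕ)
    (hblkx : ∀ a b, n0 ≤ a → a < b → wper w a ∈ S → wper w b ∈ S →
      (∀ j, a < j → j < b → wper w j ∉ S) → seg (wper w) (a + 1) b ∈ R)
    (r s : ℕ) (hrlt : r < u.length) (hslt : s < u.length)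
    (hrS : u.getD r default ∈ S) (hsS : u.getD s default ∈ S)
    (hmax : ∀ t, t < u.length → u.getD t default ∈ S → t ≤ r)
    (hmin : ∀ t, t < u.length → u.getD t default ∈ S → s ≤ t)
    (hwrap : seg (wper u) (r + 1) u.length ++ seg (wper u) 0 s ∈ R) :
    wper u ∈ SRomega S R := by
  classical
  have hP1 : 1 ≤ u.length := List.length_pos_iff.mpr hu
  have hkey : ∀ c t, t < u.length →
      wper w (c * w.length + off + t) = wper u (c * u.length + t) := by
    intro c t ht
    rw [wper_eq_of_lt u c ht]
    have h1 : c * w.length + off + t = c * w.length + (off + t) := by omega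
    rw [h1, wper_eq_of_lt w c (by omega), hocc t ht]
  apply crit S R (wper u) n0
  · intro m
    refine ⟨m * u.length + r, ?_, ?_⟩
    · have := Nat.le_mul_of_pos_right m (show 0 < u.length by omega)
      omega
    · rw [wper_eq_of_lt u m hrlt]; exact hrS
  · intro a b ha hab haS hbS hgap
    set c := a / u.length with hc
    set t := a % u.length with ht
    have htP : t < u.length := Nat.mod_lt _ (by omega)
    have hat : c * u.length + t = a := by
      rw [hc, ht, Nat.mul_comm]; exact Nat.div_add_mod a u.length
    have hcp1 : (c + 1) * u.length = c * u.length + u.length := by ring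
    have htS : u.getD t default ∈ S := by
      rw [← wper_eq_of_lt u c htP, hat]; exact haS
    have htr : t ≤ r := hmax t htP htS
    have hts : s ≤ t := hmin t htP htS
    have hbbound : b ≤ c * u.length + u.length + s := by
      by_contra h
      push_neg at h
      have hSb : wper u (c * u.length + u.length + s) ∈ S := by
        have he : c * u.length + u.length + s = (c + 1) * u.length + s := by omega
        rw [he, wper_eq_of_lt u (c + 1) hslt]; exact hsS
      exact hgap (c * u.length + u.length + s) (by omega) (by omega) hSb
    by_cases hcase : b < c * u.length + u.length
    · -- block inside one period
      have hcc : c * u.length + c * (w.length - u.length) = c * w.length := by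
        rw [← Nat.mul_add]; congr 1; omega
      set D := c * (w.length - u.length) + off with hD
      have hup : ∀ n, c * u.length ≤ n → n < c * u.length + u.length →
          wper u n = wper w (n + D) := by
        intro n h1 h2
        have h3 : n + D = c * w.length + off + (n - c * u.length) := by omega
        have h4 : c * u.length + (n - c * u.length) = n := by omega
        rw [h3, hkey c (n - c * u.length) (by omega), h4]
      have hxa : wper w (a + D) ∈ S := by
        rw [← hup a (by omega) (by omega)]; exact haS
      have hxb : wper w (b + D) ∈ S := by
        rw [← hup b (by omega) hcase]; exact hbS
      have hgap' : ∀ j, a + D < j → j < b + D → wper w j ∉ S := by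
        intro j h1 h2
        have h5 : j = (j - D) + D := by omega
        rw [h5, ← hup (j - D) (by omega) (by omega)]
        exact hgap (j - D) (by omega) (by omega)
      have hblock := hblkx (a + D) (b + D) (by omega) (by omega) hxa hxb hgap'
      have heq : seg (wper u) (a + 1) b = seg (wper w) (a + D + 1) (b + D) := by
        apply seg_congr _ _ _ _ _ _ (by omega)
        intro j hj
        have h6 : a + D + 1 + j = (a + 1 + j) + D := by omega
        rw [h6, ← hup (a + 1 + j) (by omega) (by omega)]
      rw [heq]; exact hblock
    · -- wrap-around block
      push_neg at hcase
      have hSb' : u.getD (b - (c * u.length + u.length)) default ∈ S := by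
        have he : (c + 1) * u.length + (b - (c * u.length + u.length)) = b := by omega
        rw [← wper_eq_of_lt u (c + 1) (show b - (c * u.length + u.length) < u.length by omega),
          he]
        exact hbS
      have hsge := hmin _ (show b - (c * u.length + u.length) < u.length by omega) hSb'
      have hb : b = c * u.length + u.length + s := by omega
      have hteqr : t = r := by
        by_contra hne
        have htlt : t < r := by omega
        have hSr : wper u (c * u.length + r) ∈ S := by
          rw [wper_eq_of_lt u c hrlt]; exact hrS
        exact hgap (c * u.length + r) (by omega) (by omega) hSr
      have hsplit : seg (wper u) (a + 1) (c * u.length + u.length) ++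
          seg (wper u) (c * u.length + u.length) b = seg (wper u) (a + 1) b :=
        seg_append _ _ _ _ (by omega) (by omega)
      have h1 : seg (wper u) (a + 1) (c * u.length + u.length) =
          seg (wper u) (r + 1) u.length := by
        apply seg_congr _ _ _ _ _ _ (by omega)
        intro j hj
        have he : a + 1 + j = (r + 1 + j) + c * u.length := by omega
        rw [he, wper_add_mul]
      have h2 : seg (wper u) (c * u.length + u.length) b = seg (wper u) 0 s := by
        apply seg_congr _ _ _ _ _ _ (by omega)
        intro j hj
        have he : c * u.length + u.length + j = (0 + j) + (c + 1) * u.length := by omega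
        rw [he, wper_add_mul]
      rw [← hsplit, h1, h2]
      exact hwrap

end transfer

/-- If `S ⊆ Σ` and `R ⊆ (Σ \ S)*` is subword-closed with residuals totally
ordered by inclusion, then `L = Σ*(S·R)^ω` satisfies: `(u v)^ω ∈ L` implies
`u^ω ∈ L` or `v^ω ∈ L`. -/
theorem stmt7 {σ : Type*} [Inhabited σ] (S : Set σ) (R : Set (List σ))
    (hR : ∀ w ∈ R, ∀ a ∈ w, a ∉ S)
    (hsub : ∀ v ∈ R, ∀ u : List σ, u.Sublist v → u ∈ R)
    (hchain : ∀ u u' : List σ, resF R u ⊆ resF R u' ∨ resF R u' ⊆ resF R u) :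
    ∀ u v : List σ, u ≠ [] → v ≠ [] →
      wper (u ++ v) ∈ SRomega S R →
        wper u ∈ SRomega S R ∨ wper v ∈ SRomega S R := by
  classical
  intro u v hu hv hx
  have hp1 : 1 ≤ u.length := List.length_pos_iff.mpr hu
  have hq1 : 1 ≤ v.length := List.length_pos_iff.mpr hv
  have hN : (u ++ v).length = u.length + v.length := List.length_append
  obtain ⟨n0, hinfx, hblkx⟩ := extract S R hR (wper (u ++ v)) hx
  have hn0L : n0 ≤ n0 * (u ++ v).length := Nat.le_mul_of_pos_right n0 (by omega)
  have hL1 : (n0 + 1) * (u ++ v).length = n0 * (u ++ v).length + (u ++ v).length := by ring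
  have hxval : ∀ c t, t < (u ++ v).length →
      wper (u ++ v) (c * (u ++ v).length + t) = (u ++ v).getD t default :=
    fun c t ht => wper_eq_of_lt (u ++ v) c ht
  have hxat : ∀ t, t < (u ++ v).length →
      wper (u ++ v) (n0 * (u ++ v).length + t) = (u ++ v).getD t default :=
    fun t ht => hxval n0 t ht
  have hxat2 : ∀ t, t < (u ++ v).length →
      wper (u ++ v) (n0 * (u ++ v).length + (u ++ v).length + t) = (u ++ v).getD t default := by
    intro t ht
    have e : n0 * (u ++ v).length + (u ++ v).length + t = (n0 + 1) * (u ++ v).length + t := by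
      omega
    rw [e]; exact hxval (n0 + 1) t ht
  have hgu : ∀ t, t < u.length → (u ++ v).getD t default = u.getD t default :=
    fun t ht => List.getD_append u v default t ht
  have hgv : ∀ t, u.length ≤ t → (u ++ v).getD t default = v.getD (t - u.length) default :=
    fun t ht => List.getD_append_right u v default t ht
  have hshift : ∀ a b c : ℕ,
      seg (wper (u ++ v)) (c * (u ++ v).length + a) (c * (u ++ v).length + b) =
        seg (wper (u ++ v)) a b := by
    intro a b c
    apply seg_congr _ _ _ _ _ _ (by omega)
    intro j hj
    have he : c * (u ++ v).length + a + j = (a + j) + c * (u ++ v).length := by omega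
    rw [he, wper_add_mul]
  have hshift1 : ∀ a b : ℕ,
      seg (wper (u ++ v)) ((u ++ v).length + a) ((u ++ v).length + b) =
        seg (wper (u ++ v)) a b := by
    intro a b
    have := hshift a b 1
    simpa using this
  have hyx : ∀ a b, b ≤ u.length → seg (wper u) a b = seg (wper (u ++ v)) a b := by
    intro a b hb
    apply seg_congr _ _ _ _ _ _ rfl
    intro j hj
    have h1 : a + j < u.length := by omega
    have e1 : wper u (a + j) = u.getD (a + j) default := by
      have := wper_eq_of_lt u 0 h1; simpa using this
    have e2 : wper (u ++ v) (a + j) = (u ++ v).getD (a + j) default := by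
      have := wper_eq_of_lt (u ++ v) 0 (show a + j < (u ++ v).length by omega)
      simpa using this
    rw [e1, e2, hgu _ h1]
  have hvx : ∀ a b, b ≤ v.length →
      seg (wper v) a b = seg (wper (u ++ v)) (u.length + a) (u.length + b) := by
    intro a b hb
    apply seg_congr _ _ _ _ _ _ (by omega)
    intro j hj
    have h1 : a + j < v.length := by omega
    have e1 : wper v (a + j) = v.getD (a + j) default := by
      have := wper_eq_of_lt v 0 h1; simpa using this
    have e2 : wper (u ++ v) (u.length + a + j) = (u ++ v).getD (u.length + a + j) default := by
      have := wper_eq_of_lt (u ++ v) 0 (show u.length + a + j < (u ++ v).length by omega)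
      simpa using this
    rw [e1, e2, hgv _ (by omega)]
    congr 1
    omega
  have hoccu : ∀ t, t < u.length → (u ++ v).getD (0 + t) default = u.getD t default := by
    intro t ht; rw [Nat.zero_add]; exact hgu t ht
  have hoccv : ∀ t, t < v.length → (u ++ v).getD (u.length + t) default = v.getD t default := by
    intro t ht
    rw [hgv _ (by omega)]
    congr 1
    omega
  have doU : ∀ r s : ℕ, r < u.length → s < u.length →
      u.getD r default ∈ S → u.getD s default ∈ S →
      (∀ m, m < u.length → u.getD m default ∈ S → m ≤ r) →
      (∀ m, m < u.length → u.getD m default ∈ S → s ≤ m) →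
      seg (wper (u ++ v)) (r + 1) u.length ++ seg (wper (u ++ v)) 0 s ∈ R →
      wper u ∈ SRomega S R := by
    intro r s hr1 hs1 hr2 hs2 hmax hmin hw
    apply transfer S R (u ++ v) u hu 0 (by omega) hoccu n0 hblkx r s hr1 hs1 hr2 hs2 hmax hmin
    rw [hyx (r + 1) u.length le_rfl, hyx 0 s (le_of_lt hs1)]
    exact hw
  have doV : ∀ r s : ℕ, r < v.length → s < v.length →
      v.getD r default ∈ S → v.getD s default ∈ S →
      (∀ m, m < v.length → v.getD m default ∈ S → m ≤ r) →
      (∀ m, m < v.length → v.getD m default ∈ S → s ≤ m) →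
      seg (wper (u ++ v)) (u.length + r + 1) (u ++ v).length ++
        seg (wper (u ++ v)) u.length (u.length + s) ∈ R →
      wper v ∈ SRomega S R := by
    intro r s hr1 hs1 hr2 hs2 hmax hmin hw
    apply transfer S R (u ++ v) v hv u.length (by omega) hoccv n0 hblkx r s hr1 hs1 hr2 hs2
      hmax hmin
    rw [hvx (r + 1) v.length le_rfl, hvx 0 s (le_of_lt hs1)]
    have e1 : u.length + (r + 1) = u.length + r + 1 := by omega
    have e2 : u.length + v.length = (u ++ v).length := hN.symm
    have e3 : u.length + 0 = u.length := by omega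
    rw [e1, e2, e3]
    exact hw
  by_cases hU : ∃ t, t < u.length ∧ u.getD t default ∈ S
  · -- u contains a letter of S
    obtain ⟨ta, hta1, hta2⟩ := hU
    have hU : ∃ t, t < u.length ∧ u.getD t default ∈ S := ⟨ta, hta1, hta2⟩
    set a0 := Nat.find hU with ha0def
    have ha0 : a0 < u.length ∧ u.getD a0 default ∈ S := Nat.find_spec hU
    have ha0min : ∀ m, m < u.length → u.getD m default ∈ S → a0 ≤ m :=
      fun m h1 h2 => Nat.find_min' hU ⟨h1, h2⟩
    set a1 := Nat.findGreatest (fun t => t < u.length ∧ u.getD t default ∈ S) u.length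
      with ha1def
    have ha1 : a1 < u.length ∧ u.getD a1 default ∈ S :=
      Nat.findGreatest_spec (P := fun t => t < u.length ∧ u.getD t default ∈ S)
        (le_of_lt hta1) ⟨hta1, hta2⟩
    have ha1max : ∀ m, m < u.length → u.getD m default ∈ S → m ≤ a1 := by
      intro m h1 h2
      by_contra hlt
      push_neg at hlt
      exact Nat.findGreatest_is_greatest hlt (le_of_lt h1) ⟨h1, h2⟩
    have hS1 : wper (u ++ v) (n0 * (u ++ v).length + a1) ∈ S := by
      rw [hxat a1 (by omega), hgu a1 ha1.1]; exact ha1.2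
    have hS4 : wper (u ++ v) (n0 * (u ++ v).length + (u ++ v).length + a0) ∈ S := by
      rw [hxat2 a0 (by omega), hgu a0 ha0.1]; exact ha0.2
    by_cases hV : ∃ t, t < v.length ∧ v.getD t default ∈ S
    · -- both contain letters of S
      obtain ⟨tb, htb1, htb2⟩ := hV
      have hV : ∃ t, t < v.length ∧ v.getD t default ∈ S := ⟨tb, htb1, htb2⟩
      set b0 := Nat.find hV with hb0def
      have hb0 : b0 < v.length ∧ v.getD b0 default ∈ S := Nat.find_spec hV
      have hb0min : ∀ m, m < v.length → v.getD m default ∈ S → b0 ≤ m :=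
        fun m h1 h2 => Nat.find_min' hV ⟨h1, h2⟩
      set b1 := Nat.findGreatest (fun t => t < v.length ∧ v.getD t default ∈ S) v.length
        with hb1def
      have hb1 : b1 < v.length ∧ v.getD b1 default ∈ S :=
        Nat.findGreatest_spec (P := fun t => t < v.length ∧ v.getD t default ∈ S)
        (le_of_lt htb1) ⟨htb1, htb2⟩
      have hb1max : ∀ m, m < v.length → v.getD m default ∈ S → m ≤ b1 := by
        intro m h1 h2
        by_contra hlt
        push_neg at hlt
        exact Nat.findGreatest_is_greatest hlt (le_of_lt h1) ⟨h1, h2⟩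
      -- F1 : W ++ Z0 ∈ R
      have hS2 : wper (u ++ v) (n0 * (u ++ v).length + (u.length + b0)) ∈ S := by
        rw [hxat _ (by omega), hgv _ (by omega)]
        have e : u.length + b0 - u.length = b0 := by omega
        rw [e]; exact hb0.2
      have hg1 : ∀ j, n0 * (u ++ v).length + a1 < j →
          j < n0 * (u ++ v).length + (u.length + b0) → wper (u ++ v) j ∉ S := by
        intro j h1 h2 hjS
        have e : j = n0 * (u ++ v).length + (j - n0 * (u ++ v).length) := by omega
        rw [e, hxat (j - n0 * (u ++ v).length) (by omega)] at hjS
        by_cases htu : j - n0 * (u ++ v).length < u.length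
        · rw [hgu _ htu] at hjS
          have := ha1max _ htu hjS; omega
        · push_neg at htu
          rw [hgv _ htu] at hjS
          have := hb0min _ (by omega) hjS
          omega
      have hF1 := hblkx (n0 * (u ++ v).length + a1) (n0 * (u ++ v).length + (u.length + b0))
        (by omega) (by omega) hS1 hS2 hg1
      rw [show n0 * (u ++ v).length + a1 + 1 = n0 * (u ++ v).length + (a1 + 1) from by omega,
        hshift] at hF1
      rw [← seg_append (wper (u ++ v)) (a1 + 1) u.length (u.length + b0) (by omega)
        (by omega)] at hF1
      -- F2 : Zn ++ W0 ∈ R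
      have hS3 : wper (u ++ v) (n0 * (u ++ v).length + (u.length + b1)) ∈ S := by
        rw [hxat _ (by omega), hgv _ (by omega)]
        have e : u.length + b1 - u.length = b1 := by omega
        rw [e]; exact hb1.2
      have hg2 : ∀ j, n0 * (u ++ v).length + (u.length + b1) < j →
          j < n0 * (u ++ v).length + (u ++ v).length + a0 → wper (u ++ v) j ∉ S := by
        intro j h1 h2 hjS
        by_cases htL : j - n0 * (u ++ v).length < (u ++ v).length
        · rw [show j = n0 * (u ++ v).length + (j - n0 * (u ++ v).length) from by omega,
            hxat _ htL, hgv _ (by omega)] at hjS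
          have := hb1max _ (by omega) hjS
          omega
        · push_neg at htL
          rw [show j = n0 * (u ++ v).length + (u ++ v).length +
              (j - (n0 * (u ++ v).length + (u ++ v).length)) from by omega,
            hxat2 _ (by omega), hgu _ (by omega)] at hjS
          have := ha0min _ (by omega) hjS
          omega
      have hF2 := hblkx (n0 * (u ++ v).length + (u.length + b1))
        (n0 * (u ++ v).length + (u ++ v).length + a0) (by omega) (by omega) hS3 hS4 hg2
      rw [show n0 * (u ++ v).length + (u.length + b1) + 1 =
          n0 * (u ++ v).length + (u.length + b1 + 1) from by omega,
        show n0 * (u ++ v).length + (u ++ v).length + a0 =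
          n0 * (u ++ v).length + ((u ++ v).length + a0) from by omega,
        hshift] at hF2
      rw [← seg_append (wper (u ++ v)) (u.length + b1 + 1) (u ++ v).length
        ((u ++ v).length + a0) (by omega) (by omega)] at hF2
      have e5 : seg (wper (u ++ v)) ((u ++ v).length) ((u ++ v).length + a0) =
          seg (wper (u ++ v)) 0 a0 := by
        have := hshift1 0 a0; simpa using this
      rw [e5] at hF2
      -- chain argument
      rcases hchain (seg (wper (u ++ v)) (u.length + b1 + 1) (u ++ v).length)
        (seg (wper (u ++ v)) (a1 + 1) u.length) with hc | hc
      · left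
        exact doU a1 a0 ha1.1 ha0.1 ha1.2 ha0.2 ha1max ha0min (hc hF2)
      · right
        exact doV b1 b0 hb1.1 hb0.1 hb1.2 hb0.2 hb1max hb0min (hc hF1)
    · -- only u contains letters of S
      push_neg at hV
      have hg : ∀ j, n0 * (u ++ v).length + a1 < j →
          j < n0 * (u ++ v).length + (u ++ v).length + a0 → wper (u ++ v) j ∉ S := by
        intro j h1 h2 hjS
        by_cases htL : j - n0 * (u ++ v).length < (u ++ v).length
        · rw [show j = n0 * (u ++ v).length + (j - n0 * (u ++ v).length) from by omega,
            hxat _ htL] at hjS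
          by_cases htu : j - n0 * (u ++ v).length < u.length
          · rw [hgu _ htu] at hjS
            have := ha1max _ htu hjS; omega
          · push_neg at htu
            rw [hgv _ htu] at hjS
            exact hV _ (by omega) hjS
        · push_neg at htL
          rw [show j = n0 * (u ++ v).length + (u ++ v).length +
              (j - (n0 * (u ++ v).length + (u ++ v).length)) from by omega,
            hxat2 _ (by omega), hgu _ (by omega)] at hjS
          have := ha0min _ (by omega) hjS
          omega
      have hF := hblkx (n0 * (u ++ v).length + a1)
        (n0 * (u ++ v).length + (u ++ v).length + a0) (by omega) (by omega) hS1 hS4 hg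
      rw [show n0 * (u ++ v).length + a1 + 1 = n0 * (u ++ v).length + (a1 + 1) from by omega,
        show n0 * (u ++ v).length + (u ++ v).length + a0 =
          n0 * (u ++ v).length + ((u ++ v).length + a0) from by omega,
        hshift] at hF
      rw [← seg_append (wper (u ++ v)) (a1 + 1) u.length ((u ++ v).length + a0) (by omega)
        (by omega)] at hF
      rw [← seg_append (wper (u ++ v)) u.length (u ++ v).length ((u ++ v).length + a0)
        (by omega) (by omega)] at hF
      have e5 : seg (wper (u ++ v)) ((u ++ v).length) ((u ++ v).length + a0) =
          seg (wper (u ++ v)) 0 a0 := by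
        have := hshift1 0 a0; simpa using this
      rw [e5] at hF
      have hWW : seg (wper (u ++ v)) (a1 + 1) u.length ++ seg (wper (u ++ v)) 0 a0 ∈ R :=
        hsub _ hF _ ((List.Sublist.refl _).append (List.sublist_append_right _ _))
      left
      exact doU a1 a0 ha1.1 ha0.1 ha1.2 ha0.2 ha1max ha0min hWW
  · by_cases hV : ∃ t, t < v.length ∧ v.getD t default ∈ S
    · -- only v contains letters of S
      push_neg at hU
      obtain ⟨tb, htb1, htb2⟩ := hV
      have hV : ∃ t, t < v.length ∧ v.getD t default ∈ S := ⟨tb, htb1, htb2⟩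
      set b0 := Nat.find hV with hb0def
      have hb0 : b0 < v.length ∧ v.getD b0 default ∈ S := Nat.find_spec hV
      have hb0min : ∀ m, m < v.length → v.getD m default ∈ S → b0 ≤ m :=
        fun m h1 h2 => Nat.find_min' hV ⟨h1, h2⟩
      set b1 := Nat.findGreatest (fun t => t < v.length ∧ v.getD t default ∈ S) v.length
        with hb1def
      have hb1 : b1 < v.length ∧ v.getD b1 default ∈ S :=
        Nat.findGreatest_spec (P := fun t => t < v.length ∧ v.getD t default ∈ S)
        (le_of_lt htb1) ⟨htb1, htb2⟩
      have hb1max : ∀ m, m < v.length → v.getD m default ∈ S → m ≤ b1 := by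
        intro m h1 h2
        by_contra hlt
        push_neg at hlt
        exact Nat.findGreatest_is_greatest hlt (le_of_lt h1) ⟨h1, h2⟩
      have hS3 : wper (u ++ v) (n0 * (u ++ v).length + (u.length + b1)) ∈ S := by
        rw [hxat _ (by omega), hgv _ (by omega)]
        have e : u.length + b1 - u.length = b1 := by omega
        rw [e]; exact hb1.2
      have hS4 : wper (u ++ v) (n0 * (u ++ v).length + (u ++ v).length + (u.length + b0))
          ∈ S := by
        rw [hxat2 _ (by omega), hgv _ (by omega)]
        have e : u.length + b0 - u.length = b0 := by omega
        rw [e]; exact hb0.2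
      have hg : ∀ j, n0 * (u ++ v).length + (u.length + b1) < j →
          j < n0 * (u ++ v).length + (u ++ v).length + (u.length + b0) →
          wper (u ++ v) j ∉ S := by
        intro j h1 h2 hjS
        by_cases htL : j - n0 * (u ++ v).length < (u ++ v).length
        · rw [show j = n0 * (u ++ v).length + (j - n0 * (u ++ v).length) from by omega,
            hxat _ htL, hgv _ (by omega)] at hjS
          have := hb1max _ (by omega) hjS
          omega
        · push_neg at htL
          rw [show j = n0 * (u ++ v).length + (u ++ v).length +
              (j - (n0 * (u ++ v).length + (u ++ v).length)) from by omega,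
            hxat2 _ (by omega)] at hjS
          by_cases htu : j - (n0 * (u ++ v).length + (u ++ v).length) < u.length
          · rw [hgu _ htu] at hjS
            exact hU _ htu hjS
          · push_neg at htu
            rw [hgv _ htu] at hjS
            have := hb0min _ (by omega) hjS
            omega
      have hF := hblkx (n0 * (u ++ v).length + (u.length + b1))
        (n0 * (u ++ v).length + (u ++ v).length + (u.length + b0)) (by omega) (by omega)
        hS3 hS4 hg
      rw [show n0 * (u ++ v).length + (u.length + b1) + 1 =
          n0 * (u ++ v).length + (u.length + b1 + 1) from by omega,
        show n0 * (u ++ v).length + (u ++ v).length + (u.length + b0) =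
          n0 * (u ++ v).length + ((u ++ v).length + (u.length + b0)) from by omega,
        hshift] at hF
      rw [← seg_append (wper (u ++ v)) (u.length + b1 + 1) (u ++ v).length
        ((u ++ v).length + (u.length + b0)) (by omega) (by omega)] at hF
      rw [← seg_append (wper (u ++ v)) (u ++ v).length ((u ++ v).length + u.length)
        ((u ++ v).length + (u.length + b0)) (by omega) (by omega)] at hF
      rw [hshift1 u.length (u.length + b0)] at hF
      have hZZ : seg (wper (u ++ v)) (u.length + b1 + 1) (u ++ v).length ++
          seg (wper (u ++ v)) u.length (u.length + b0) ∈ R :=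
        hsub _ hF _ ((List.Sublist.refl _).append (List.sublist_append_right _ _))
      right
      exact doV b1 b0 hb1.1 hb0.1 hb1.2 hb0.2 hb1max hb0min hZZ
    · -- no letter of S at all : contradiction
      exfalso
      obtain ⟨n, -, hnS⟩ := hinfx 0
      have hnS' : (u ++ v).getD (n % (u ++ v).length) default ∈ S := hnS
      have heN : n % (u ++ v).length < (u ++ v).length := Nat.mod_lt _ (by omega)
      by_cases he : n % (u ++ v).length < u.length
      · rw [hgu _ he] at hnS'
        exact hU ⟨_, he, hnS'⟩
      · push_neg at he
        rw [hgv _ he] at hnS'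
        exact hV ⟨_, by omega, hnS'⟩
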